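/- For any integers n ≥ k ≥ 4, there exists a simple undirected graph on 15n - 27 vertices containing exactly k Hamiltonian cycles. -/

import Mathlib

/-- The set of Hamiltonian cycles of a graph, regarded as edge sets. -/
def hamCycleSets {V : Type*} [DecidableEq V] (G : SimpleGraph V) : Set (Set (Sym2 V)) :=
  {s | ∃ (u : V) (w : G.Walk u u), w.IsHamiltonianCycle ∧ s = {e | e ∈ w.edges}}

open SimpleGraph List

section general
variable {V : Type*} [DecidableEq V] {G : SimpleGraph V} {a b : V}

lemma countP_edges_incident (w : G.Walk a b) (v : V) :
    w.edges.countP (fun e => decide (v ∈ e)) + (if v = a then 1 else 0) + (if v = b then 1 else 0)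
      = 2 * w.support.count v := by
  induction w with
  | nil =>
    rename_i u
    rcases eq_or_ne v u with rfl | h <;> simp [*, List.count_singleton, eq_comm]
  | @cons u c d h q ih =>
    have hne : u ≠ c := h.ne
    simp only [SimpleGraph.Walk.edges_cons, List.countP_cons, SimpleGraph.Walk.support_cons,
      List.count_cons]
    rcases eq_or_ne v u with rfl | h1 <;> rcases eq_or_ne v c with rfl | h2 <;>
      rcases eq_or_ne v d with rfl | h3 <;> simp_all [Sym2.mem_iff] <;>
      first | omega | exact Ne.symm h1

lemma ham_countP (w : G.Walk a a) (hw : w.IsHamiltonianCycle) (v : V) :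
    w.edges.countP (fun e => decide (v ∈ e)) = 2 := by
  have h := countP_edges_incident w v
  rcases eq_or_ne v a with rfl | hv
  · rw [hw.count_support_self] at h
    simp at h; omega
  · rw [hw.support_count_of_ne (Ne.symm hv)] at h
    simp [hv] at h; omega

lemma two_le_countP {α : Type*} {l : List α} {p : α → Bool} {x y : α}
    (hx : x ∈ l) (hy : y ∈ l) (hxy : x ≠ y) (hpx : p x) (hpy : p y) :
    2 ≤ l.countP p := by
  rw [List.countP_eq_length_filter]
  have hx' : x ∈ l.filter p := List.mem_filter.2 ⟨hx, hpx⟩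
  have hy' : y ∈ l.filter p := List.mem_filter.2 ⟨hy, hpy⟩
  rcases hf : l.filter p with _ | ⟨z, _ | ⟨z', t⟩⟩
  · simp [hf] at hx'
  · rw [hf] at hx' hy'; simp at hx' hy'; exact absurd (hx'.trans hy'.symm) hxy
  · simp

lemma ham_two_incident (w : G.Walk a a) (hw : w.IsHamiltonianCycle) (v : V) :
    ∃ e₁ e₂, e₁ ≠ e₂ ∧ e₁ ∈ w.edges ∧ e₂ ∈ w.edges ∧ v ∈ e₁ ∧ v ∈ e₂ ∧
      ∀ e ∈ w.edges, v ∈ e → e = e₁ ∨ e = e₂ := by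
  have h2 := ham_countP w hw v
  rw [List.countP_eq_length_filter] at h2
  obtain ⟨e₁, e₂, hf⟩ := List.length_eq_two.1 h2
  have hnd : (w.edges.filter (fun e => decide (v ∈ e))).Nodup :=
    hw.isCycle.isTrail.edges_nodup.filter _
  rw [hf] at hnd
  have hne : e₁ ≠ e₂ := by simpa using (List.nodup_cons.1 hnd).1
  have h1 : e₁ ∈ w.edges.filter (fun e => decide (v ∈ e)) := by rw [hf]; simp
  have h2' : e₂ ∈ w.edges.filter (fun e => decide (v ∈ e)) := by rw [hf]; simp
  rw [List.mem_filter] at h1 h2'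
  refine ⟨e₁, e₂, hne, h1.1, h2'.1, by simpa using h1.2, by simpa using h2'.2, ?_⟩
  intro e he hve
  have : e ∈ w.edges.filter (fun e => decide (v ∈ e)) := List.mem_filter.2 ⟨he, by simpa⟩
  rw [hf] at this
  simpa using this

omit [DecidableEq V] in
lemma walk_edge_incident_classify (w : G.Walk a b) {e : Sym2 V} (he : e ∈ w.edges) {v : V}
    (hv : v ∈ e) : ∃ u, e = s(v, u) ∧ G.Adj v u := by
  obtain ⟨u, rfl⟩ := Sym2.mem_iff_exists.1 hv
  exact ⟨u, rfl, w.edges_subset_edgeSet he⟩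

/-- Build a walk from a list of intermediate vertices. -/
def walkOfList {G : SimpleGraph V} : (a : V) → (l : List V) → (b : V) →
    (h : List.Chain G.Adj a (l ++ [b])) → G.Walk a b
  | a, [], b, h => Walk.cons (by simpa using (List.chain_cons.1 h).1) Walk.nil
  | a, c :: l, b, h =>
      Walk.cons (List.chain_cons.1 h).1 (walkOfList c l b (List.chain_cons.1 h).2)

omit [DecidableEq V] in
@[simp] lemma walkOfList_support (a : V) (l : List V) (b : V) (h) :
    (walkOfList (G := G) a l b h).support = a :: (l ++ [b]) := by
  induction l generalizing a with
  | nil => simp [walkOfList]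
  | cons c l ih => simp [walkOfList, ih]; exact ih _ _

omit [DecidableEq V] in
lemma walkOfList_lastEdge (a : V) (l : List V) (b : V) (h) :
    s(l.getLastD a, b) ∈ (walkOfList (G := G) a l b h).edges := by
  induction l generalizing a with
  | nil => simp [walkOfList]
  | cons c l ih =>
    simp only [walkOfList, SimpleGraph.Walk.edges_cons, List.getLastD_cons]
    exact List.mem_cons_of_mem _ (ih c _)

end general

/-- vertex `i` (mod `M+8`) of the fan graph -/
def fanVtx (M i : ℕ) : Fin (M+8) := ⟨i % (M+8), Nat.mod_lt _ (by omega)⟩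

def fanGraph (M k : ℕ) : SimpleGraph (Fin (M+8)) :=
  SimpleGraph.fromRel (fun u v =>
    (u.val + 1 = v.val ∧ v.val + 2 ≤ M + 8) ∨ (u.val = M + 6 ∧ v.val = 0) ∨
    (u.val = M + 7 ∧ v.val ≤ k))

def chainE (M i : ℕ) : Sym2 (Fin (M+8)) := s(fanVtx M i, fanVtx M (i+1))
def wrapE (M : ℕ) : Sym2 (Fin (M+8)) := s(fanVtx M (M+6), fanVtx M 0)
def spokeE (M i : ℕ) : Sym2 (Fin (M+8)) := s(fanVtx M (M+7), fanVtx M i)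

def fanSet (M k a : ℕ) : Set (Sym2 (Fin (M+8))) :=
  {e | (∃ i, i ≤ M + 5 ∧ i ≠ a ∧ e = chainE M i) ∨ e = wrapE M ∨
    e = spokeE M a ∨ e = spokeE M (a+1)}

lemma fanVtx_val {M i : ℕ} (h : i < M + 8) : (fanVtx M i).val = i := Nat.mod_eq_of_lt h

lemma fanVtx_eta {M : ℕ} (v : Fin (M+8)) : fanVtx M v.val = v := by
  apply Fin.ext; exact Nat.mod_eq_of_lt v.isLt

lemma fanVtx_inj {M i j : ℕ} (hi : i < M + 8) (hj : j < M + 8) (h : fanVtx M i = fanVtx M j) :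
    i = j := by
  have := congrArg Fin.val h
  rwa [fanVtx_val hi, fanVtx_val hj] at this

lemma fanVtx_ne {M i j : ℕ} (hi : i < M + 8) (hj : j < M + 8) (h : i ≠ j) :
    fanVtx M i ≠ fanVtx M j := fun hc => h (fanVtx_inj hi hj hc)

lemma fan_adj_iff {M k : ℕ} {u v : Fin (M+8)} :
    (fanGraph M k).Adj u v ↔ u ≠ v ∧
      ((u.val + 1 = v.val ∧ v.val + 2 ≤ M + 8) ∨ (u.val = M + 6 ∧ v.val = 0) ∨
        (u.val = M + 7 ∧ v.val ≤ k) ∨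
       (v.val + 1 = u.val ∧ u.val + 2 ≤ M + 8) ∨ (v.val = M + 6 ∧ u.val = 0) ∨
        (v.val = M + 7 ∧ u.val ≤ k)) := by
  rw [fanGraph, SimpleGraph.fromRel_adj]; tauto

lemma fan_adj_chain {M k i : ℕ} (h : i + 3 ≤ M + 8) :
    (fanGraph M k).Adj (fanVtx M i) (fanVtx M (i+1)) := by
  rw [fan_adj_iff]
  rw [show ((fanVtx M i).val = i) from fanVtx_val (by omega),
    show ((fanVtx M (i+1)).val = i+1) from fanVtx_val (by omega)] at *
  exact ⟨fanVtx_ne (by omega) (by omega) (by omega), by omega⟩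

lemma fan_adj_wrap {M k : ℕ} : (fanGraph M k).Adj (fanVtx M (M+6)) (fanVtx M 0) := by
  rw [fan_adj_iff]
  rw [show ((fanVtx M (M+6)).val = M+6) from fanVtx_val (by omega),
    show ((fanVtx M 0).val = 0) from fanVtx_val (by omega)] at *
  exact ⟨fanVtx_ne (by omega) (by omega) (by omega), by omega⟩

lemma fan_adj_spoke {M k i : ℕ} (h : i ≤ k) (hkM : k + 4 ≤ M + 8) :
    (fanGraph M k).Adj (fanVtx M (M+7)) (fanVtx M i) := by
  rw [fan_adj_iff]
  rw [show ((fanVtx M (M+7)).val = M+7) from fanVtx_val (by omega),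
    show ((fanVtx M i).val = i) from fanVtx_val (by omega)] at *
  exact ⟨fanVtx_ne (by omega) (by omega) (by omega), by omega⟩

lemma fan_adj_classify {M k : ℕ} {u v : Fin (M+8)} (h : (fanGraph M k).Adj u v) :
    (u.val + 1 = v.val ∧ v.val + 2 ≤ M + 8) ∨ (u.val = M + 6 ∧ v.val = 0) ∨
      (u.val = M + 7 ∧ v.val ≤ k) ∨
    (v.val + 1 = u.val ∧ u.val + 2 ≤ M + 8) ∨ (v.val = M + 6 ∧ u.val = 0) ∨
      (v.val = M + 7 ∧ u.val ≤ k) :=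
  (fan_adj_iff.1 h).2

section edges
variable {M k i j : ℕ}

lemma chainE_inj (hi : i ≤ M + 6) (hj : j ≤ M + 6) (h : chainE M i = chainE M j) : i = j := by
  rw [chainE, chainE, Sym2.eq_iff] at h
  rcases h with ⟨h1, h2⟩ | ⟨h1, h2⟩ <;>
    · have a1 := fanVtx_inj (by omega) (by omega) h1
      have a2 := fanVtx_inj (by omega) (by omega) h2
      omega

lemma chainE_ne_wrapE (hi : i ≤ M + 5) : chainE M i ≠ wrapE M := by
  intro h
  rw [chainE, wrapE, Sym2.eq_iff] at h
  rcases h with ⟨h1, h2⟩ | ⟨h1, h2⟩ <;>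
    · have a1 := fanVtx_inj (by omega) (by omega) h1
      have a2 := fanVtx_inj (by omega) (by omega) h2
      omega

lemma chainE_ne_spokeE (hi : i ≤ M + 5) (hj : j ≤ M + 6) : chainE M i ≠ spokeE M j := by
  intro h
  rw [chainE, spokeE, Sym2.eq_iff] at h
  rcases h with ⟨h1, h2⟩ | ⟨h1, h2⟩ <;>
    · have a1 := fanVtx_inj (by omega) (by omega) h1
      have a2 := fanVtx_inj (by omega) (by omega) h2
      omega

lemma wrapE_ne_spokeE (hj : j ≤ M + 6) : wrapE M ≠ spokeE M j := by
  intro h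
  rw [wrapE, spokeE, Sym2.eq_iff] at h
  rcases h with ⟨h1, h2⟩ | ⟨h1, h2⟩ <;>
    · have a1 := fanVtx_inj (by omega) (by omega) h1
      have a2 := fanVtx_inj (by omega) (by omega) h2
      omega

lemma spokeE_inj (hi : i ≤ M + 6) (hj : j ≤ M + 6) (h : spokeE M i = spokeE M j) : i = j := by
  rw [spokeE, spokeE, Sym2.eq_iff] at h
  rcases h with ⟨h1, h2⟩ | ⟨h1, h2⟩ <;>
    · have a1 := fanVtx_inj (by omega) (by omega) h1
      have a2 := fanVtx_inj (by omega) (by omega) h2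
      omega

lemma mem_chainE_left : fanVtx M i ∈ chainE M i := by rw [chainE]; simp
lemma mem_chainE_right : fanVtx M (i+1) ∈ chainE M i := by rw [chainE]; simp
lemma mem_wrapE_left : fanVtx M (M+6) ∈ wrapE M := by rw [wrapE]; simp
lemma mem_wrapE_right : fanVtx M 0 ∈ wrapE M := by rw [wrapE]; simp
lemma mem_spokeE_left : fanVtx M (M+7) ∈ spokeE M i := by rw [spokeE]; simp
lemma mem_spokeE_right : fanVtx M i ∈ spokeE M i := by rw [spokeE]; simp

lemma fan_edge_classify {e : Sym2 (Fin (M+8))} (he : e ∈ (fanGraph M k).edgeSet) :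
    (∃ i, i ≤ M + 5 ∧ e = chainE M i) ∨ e = wrapE M ∨ (∃ i, i ≤ k ∧ e = spokeE M i) := by
  induction e with
  | _ u v =>
    rw [SimpleGraph.mem_edgeSet] at he
    have h := fan_adj_classify he
    have hu : fanVtx M u.val = u := fanVtx_eta u
    have hv : fanVtx M v.val = v := fanVtx_eta v
    rcases h with ⟨h1, h2⟩ | ⟨h1, h2⟩ | ⟨h1, h2⟩ | ⟨h1, h2⟩ | ⟨h1, h2⟩ | ⟨h1, h2⟩
    · exact Or.inl ⟨u.val, by omega, by rw [chainE, hu, show u.val + 1 = v.val from h1, hv]⟩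
    · exact Or.inr (Or.inl (by rw [wrapE, ← hu, ← hv, h1, h2]))
    · exact Or.inr (Or.inr ⟨v.val, h2, by rw [spokeE, hv, ← h1, hu]⟩)
    · refine Or.inl ⟨v.val, by omega, ?_⟩
      rw [chainE, hv, show v.val + 1 = u.val from h1, hu, Sym2.eq_swap]
    · exact Or.inr (Or.inl (by rw [wrapE, ← hu, ← hv, h1, h2, Sym2.eq_swap]))
    · exact Or.inr (Or.inr ⟨u.val, h2, by rw [spokeE, hu, ← h1, hv, Sym2.eq_swap]⟩)
end edges

section helpers
variable {α : Type*} {P : α → Prop} {c1 c2 c3 e1 e2 : α}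

lemma both_of_two (hne : e1 ≠ e2) (he1 : P e1) (he2 : P e2)
    (m1 : e1 = c1 ∨ e1 = c2) (m2 : e2 = c1 ∨ e2 = c2) : P c1 ∧ P c2 := by
  rcases m1 with rfl | rfl <;> rcases m2 with rfl | rfl <;>
    first | exact ⟨he1, he2⟩ | exact ⟨he2, he1⟩ | exact absurd rfl hne

lemma xor_of_three (h12 : c1 ≠ c2) (h13 : c1 ≠ c3) (h23 : c2 ≠ c3)
    (hne : e1 ≠ e2) (he1 : P e1) (he2 : P e2)
    (m1 : e1 = c1 ∨ e1 = c2 ∨ e1 = c3) (m2 : e2 = c1 ∨ e2 = c2 ∨ e2 = c3)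
    (hc2 : c2 = e1 ∨ c2 = e2) (hall1 : P c1 → c1 = e1 ∨ c1 = e2)
    (hall3 : P c3 → c3 = e1 ∨ c3 = e2) :
    (P c1 ∧ ¬ P c3) ∨ (¬ P c1 ∧ P c3) := by
  rcases m1 with rfl | rfl | rfl <;> rcases m2 with rfl | rfl | rfl <;>
    rcases hc2 with h | h <;> (try subst h) <;> tauto

lemma two_of_three (h12 : c1 ≠ c2) (h13 : c1 ≠ c3) (h23 : c2 ≠ c3)
    (hne : e1 ≠ e2) (he1 : P e1) (he2 : P e2)
    (m1 : e1 = c1 ∨ e1 = c2 ∨ e1 = c3) (m2 : e2 = c1 ∨ e2 = c2 ∨ e2 = c3)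
    (hall1 : P c1 → c1 = e1 ∨ c1 = e2) (hall2 : P c2 → c2 = e1 ∨ c2 = e2)
    (hall3 : P c3 → c3 = e1 ∨ c3 = e2) :
    (P c1 ∧ P c2 ∧ ¬ P c3) ∨ (P c1 ∧ ¬ P c2 ∧ P c3) ∨ (¬ P c1 ∧ P c2 ∧ P c3) := by
  rcases m1 with rfl | rfl | rfl <;> rcases m2 with rfl | rfl | rfl <;> tauto
end helpers

lemma fan_complete {M k : ℕ} (hk : 4 ≤ k) (hkM : k + 4 ≤ M + 8) {u : Fin (M+8)}
    {w : (fanGraph M k).Walk u u} (hw : w.IsHamiltonianCycle) :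
    ∃ a, a < k ∧ {e | e ∈ w.edges} = fanSet M k a := by
  -- classification of edges of w incident to a given vertex
  have classify : ∀ t : ℕ, t < M + 8 → ∀ e ∈ w.edges, fanVtx M t ∈ e →
      ∃ q, q < M + 8 ∧ e = s(fanVtx M t, fanVtx M q) ∧
        ((t + 1 = q ∧ q + 2 ≤ M + 8) ∨ (q + 1 = t ∧ t + 2 ≤ M + 8) ∨ (t = M + 6 ∧ q = 0) ∨
         (q = M + 6 ∧ t = 0) ∨ (t = M + 7 ∧ q ≤ k) ∨ (q = M + 7 ∧ t ≤ k)) := by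
    intro t ht e he hv
    obtain ⟨u', he', hadj⟩ := walk_edge_incident_classify w he hv
    have h := fan_adj_classify hadj
    rw [fanVtx_val ht] at h
    exact ⟨u'.val, u'.isLt, by rw [he', fanVtx_eta], by tauto⟩
  -- wrap edge and the last chain edge are forced (vertex M+6)
  have hwrap2 : chainE M (M+5) ∈ w.edges ∧ wrapE M ∈ w.edges := by
    obtain ⟨e1, e2, hne, he1, he2, hv1, hv2, hall⟩ := ham_two_incident w hw (fanVtx M (M+6))
    have hcl : ∀ e ∈ w.edges, fanVtx M (M+6) ∈ e → e = chainE M (M+5) ∨ e = wrapE M := by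
      intro e he hv
      obtain ⟨q, hq, rfl, hc⟩ := classify (M+6) (by omega) e he hv
      rcases hc with ⟨h1, h2⟩ | ⟨h1, h2⟩ | ⟨h1, h2⟩ | ⟨h1, h2⟩ | ⟨h1, h2⟩ | ⟨h1, h2⟩
      · omega
      · left; rw [chainE, show q = M+5 from by omega, show M+5+1 = M+6 from by omega]
        exact Sym2.eq_swap
      · right; rw [wrapE, h2]
      · omega
      · omega
      · omega
    exact both_of_two hne he1 he2 (hcl e1 he1 hv1) (hcl e2 he2 hv2)
  -- forced chain edges
  have Xforce : ∀ j, k ≤ j → j ≤ M + 5 → chainE M j ∈ w.edges := by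
    intro j hj1 hj2
    rcases Nat.lt_or_ge j (M+5) with hj3 | hj3
    · obtain ⟨e1, e2, hne, he1, he2, hv1, hv2, hall⟩ := ham_two_incident w hw (fanVtx M (j+1))
      have hcl : ∀ e ∈ w.edges, fanVtx M (j+1) ∈ e →
          e = chainE M j ∨ e = chainE M (j+1) := by
        intro e he hv
        obtain ⟨q, hq, rfl, hc⟩ := classify (j+1) (by omega) e he hv
        rcases hc with ⟨h1, h2⟩ | ⟨h1, h2⟩ | ⟨h1, h2⟩ | ⟨h1, h2⟩ | ⟨h1, h2⟩ | ⟨h1, h2⟩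
        · right; rw [chainE, show q = j+1+1 from by omega]
        · left; rw [chainE, show q = j from by omega]; exact Sym2.eq_swap
        · omega
        · omega
        · omega
        · omega
      exact (both_of_two hne he1 he2 (hcl e1 he1 hv1) (hcl e2 he2 hv2)).1
    · have : j = M + 5 := by omega
      rw [this]; exact hwrap2.1
  -- vertex 0 : exactly one of chain 0 / spoke 0
  have f0 : (chainE M 0 ∈ w.edges ∧ spokeE M 0 ∉ w.edges) ∨
      (chainE M 0 ∉ w.edges ∧ spokeE M 0 ∈ w.edges) := by
    obtain ⟨e1, e2, hne, he1, he2, hv1, hv2, hall⟩ := ham_two_incident w hw (fanVtx M 0)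
    have hcl : ∀ e ∈ w.edges, fanVtx M 0 ∈ e →
        e = chainE M 0 ∨ e = wrapE M ∨ e = spokeE M 0 := by
      intro e he hv
      obtain ⟨q, hq, rfl, hc⟩ := classify 0 (by omega) e he hv
      rcases hc with ⟨h1, h2⟩ | ⟨h1, h2⟩ | ⟨h1, h2⟩ | ⟨h1, h2⟩ | ⟨h1, h2⟩ | ⟨h1, h2⟩
      · left; rw [chainE, show q = 0+1 from by omega]
      · omega
      · omega
      · right; left; rw [wrapE, show q = M+6 from h1]; exact Sym2.eq_swap
      · omega
      · right; right; rw [spokeE, show q = M+7 from h1]; exact Sym2.eq_swap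
    exact xor_of_three (chainE_ne_wrapE (by omega)) (chainE_ne_spokeE (by omega) (by omega))
      (wrapE_ne_spokeE (by omega)) hne he1 he2 (hcl e1 he1 hv1) (hcl e2 he2 hv2)
      (hall _ hwrap2.2 mem_wrapE_right) (fun h => hall _ h mem_chainE_left)
      (fun h => hall _ h mem_spokeE_right)
  -- vertex k : exactly one of chain (k-1) / spoke k
  have fkv : (chainE M (k-1) ∈ w.edges ∧ spokeE M k ∉ w.edges) ∨
      (chainE M (k-1) ∉ w.edges ∧ spokeE M k ∈ w.edges) := by
    obtain ⟨e1, e2, hne, he1, he2, hv1, hv2, hall⟩ := ham_two_incident w hw (fanVtx M k)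
    have hcl : ∀ e ∈ w.edges, fanVtx M k ∈ e →
        e = chainE M (k-1) ∨ e = chainE M k ∨ e = spokeE M k := by
      intro e he hv
      obtain ⟨q, hq, rfl, hc⟩ := classify k (by omega) e he hv
      rcases hc with ⟨h1, h2⟩ | ⟨h1, h2⟩ | ⟨h1, h2⟩ | ⟨h1, h2⟩ | ⟨h1, h2⟩ | ⟨h1, h2⟩
      · right; left; rw [chainE, show q = k+1 from by omega]
      · left; rw [chainE, show q = k-1 from by omega, show k-1+1 = k from by omega]
        exact Sym2.eq_swap
      · omega
      · omega
      · omega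
      · right; right; rw [spokeE, show q = M+7 from h1]; exact Sym2.eq_swap
    have hmemc1 : fanVtx M k ∈ chainE M (k-1) := by
      rw [show k = k-1+1 from by omega]; exact mem_chainE_right
    exact xor_of_three (fun h => by have := chainE_inj (M := M) (by omega) (by omega) h; omega)
      (chainE_ne_spokeE (by omega) (by omega)) (chainE_ne_spokeE (by omega) (by omega))
      hne he1 he2 (hcl e1 he1 hv1) (hcl e2 he2 hv2)
      (hall _ (Xforce k (by omega) (by omega)) mem_chainE_left)
      (fun h => hall _ h hmemc1) (fun h => hall _ h mem_spokeE_right)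
  -- middle vertices
  have fmid : ∀ j, j + 2 ≤ k →
      ((chainE M j ∈ w.edges ∧ chainE M (j+1) ∈ w.edges ∧ spokeE M (j+1) ∉ w.edges) ∨
       (chainE M j ∈ w.edges ∧ chainE M (j+1) ∉ w.edges ∧ spokeE M (j+1) ∈ w.edges) ∨
       (chainE M j ∉ w.edges ∧ chainE M (j+1) ∈ w.edges ∧ spokeE M (j+1) ∈ w.edges)) := by
    intro j hj
    obtain ⟨e1, e2, hne, he1, he2, hv1, hv2, hall⟩ := ham_two_incident w hw (fanVtx M (j+1))
    have hcl : ∀ e ∈ w.edges, fanVtx M (j+1) ∈ e →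
        e = chainE M j ∨ e = chainE M (j+1) ∨ e = spokeE M (j+1) := by
      intro e he hv
      obtain ⟨q, hq, rfl, hc⟩ := classify (j+1) (by omega) e he hv
      rcases hc with ⟨h1, h2⟩ | ⟨h1, h2⟩ | ⟨h1, h2⟩ | ⟨h1, h2⟩ | ⟨h1, h2⟩ | ⟨h1, h2⟩
      · right; left; rw [chainE, show q = j+1+1 from by omega]
      · left; rw [chainE, show q = j from by omega]; exact Sym2.eq_swap
      · omega
      · omega
      · omega
      · right; right; rw [spokeE, show q = M+7 from h1]; exact Sym2.eq_swap
    exact two_of_three (fun h => by have := chainE_inj (M := M) (by omega) (by omega) h; omega)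
      (chainE_ne_spokeE (by omega) (by omega)) (chainE_ne_spokeE (by omega) (by omega))
      hne he1 he2 (hcl e1 he1 hv1) (hcl e2 he2 hv2)
      (fun h => hall _ h mem_chainE_right) (fun h => hall _ h mem_chainE_left)
      (fun h => hall _ h mem_spokeE_right)
  -- the hub
  obtain ⟨a, b, hab, hbk, hSa, hSb, hSall⟩ :
      ∃ a b, a < b ∧ b ≤ k ∧ spokeE M a ∈ w.edges ∧ spokeE M b ∈ w.edges ∧
        ∀ i, i ≤ k → spokeE M i ∈ w.edges → i = a ∨ i = b := by
    obtain ⟨e1, e2, hne, he1, he2, hv1, hv2, hall⟩ := ham_two_incident w hw (fanVtx M (M+7))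
    have hcl : ∀ e ∈ w.edges, fanVtx M (M+7) ∈ e → ∃ i, i ≤ k ∧ e = spokeE M i := by
      intro e he hv
      obtain ⟨q, hq, rfl, hc⟩ := classify (M+7) (by omega) e he hv
      rcases hc with ⟨h1, h2⟩ | ⟨h1, h2⟩ | ⟨h1, h2⟩ | ⟨h1, h2⟩ | ⟨h1, h2⟩ | ⟨h1, h2⟩
      · omega
      · omega
      · omega
      · omega
      · exact ⟨q, h2, rfl⟩
      · omega
    obtain ⟨a0, ha0, rfl⟩ := hcl e1 he1 hv1
    obtain ⟨b0, hb0, rfl⟩ := hcl e2 he2 hv2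
    have hne' : a0 ≠ b0 := fun h => hne (by rw [h])
    have key : ∀ i, i ≤ k → spokeE M i ∈ w.edges → i = a0 ∨ i = b0 := by
      intro i hi hmem
      rcases hall _ hmem mem_spokeE_left with h | h
      · exact Or.inl (spokeE_inj (by omega) (by omega) h)
      · exact Or.inr (spokeE_inj (by omega) (by omega) h)
    rcases Nat.lt_or_ge a0 b0 with h | h
    · exact ⟨a0, b0, h, hb0, he1, he2, key⟩
    · exact ⟨b0, a0, by omega, ha0, he2, he1, fun i hi hm => (key i hi hm).symm⟩
  -- chain analysis
  have hak : a ≤ k - 1 := by omega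
  have claim1 : ∀ i, i < a → chainE M i ∈ w.edges := by
    intro i
    induction i with
    | zero =>
      intro h0
      rcases f0 with ⟨h, _⟩ | ⟨_, h⟩
      · exact h
      · exact absurd (hSall 0 (by omega) h) (by omega)
    | succ i ih =>
      intro hia
      have hXi := ih (by omega)
      rcases fmid i (by omega) with ⟨_, h, _⟩ | ⟨_, _, h⟩ | ⟨h, _, _⟩
      · exact h
      · exact absurd (hSall (i+1) (by omega) h) (by omega)
      · exact absurd hXi h
  have claim2 : chainE M a ∉ w.edges := by
    rcases Nat.eq_zero_or_pos a with rfl | hpos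
    · rcases f0 with ⟨_, h⟩ | ⟨h, _⟩
      · exact absurd hSa h
      · exact h
    · obtain ⟨j, rfl⟩ : ∃ j, a = j + 1 := ⟨a - 1, by omega⟩
      rcases fmid j (by omega) with ⟨_, _, h⟩ | ⟨_, h, _⟩ | ⟨h, _, _⟩
      · exact absurd hSa h
      · exact h
      · exact absurd (claim1 j (by omega)) h
  have claim3 : b = a + 1 := by
    rcases Nat.lt_or_ge (a+1) k with h1 | h1
    · rcases fmid a (by omega) with ⟨h, _, _⟩ | ⟨h, _, _⟩ | ⟨_, _, h⟩
      · exact absurd h claim2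
      · exact absurd h claim2
      · rcases hSall (a+1) (by omega) h with h' | h' <;> omega
    · have hak' : a + 1 = k := by omega
      rcases fkv with ⟨h, _⟩ | ⟨_, h⟩
      · rw [show k - 1 = a from by omega] at h
        exact absurd h claim2
      · rcases hSall k (by omega) h with h' | h' <;> omega
  have claim4 : ∀ i, a < i → i + 1 ≤ k → chainE M i ∈ w.edges := by
    intro i
    induction i with
    | zero => omega
    | succ i ih =>
      intro hai hik
      rcases Nat.lt_or_ge a i with hlt | hge
      · have hXi := ih (by omega) (by omega)
        rcases fmid i (by omega) with ⟨_, h, _⟩ | ⟨_, _, h⟩ | ⟨h, _, _⟩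
        · exact h
        · exact absurd (hSall (i+1) (by omega) h) (by omega)
        · exact absurd hXi h
      · have hia : i = a := by omega
        subst hia
        rcases fmid i (by omega) with ⟨h, _, _⟩ | ⟨h, _, _⟩ | ⟨_, h, _⟩
        · exact absurd h claim2
        · exact absurd h claim2
        · exact h
  have Xall : ∀ i, i ≤ M + 5 → i ≠ a → chainE M i ∈ w.edges := by
    intro i hi hia
    rcases Nat.lt_or_ge i a with h | h
    · exact claim1 i h
    · rcases Nat.lt_or_ge i k with h2 | h2
      · exact claim4 i (by omega) (by omega)
      · exact Xforce i h2 hi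
  refine ⟨a, by omega, ?_⟩
  ext e
  simp only [Set.mem_setOf_eq, fanSet]
  constructor
  · intro he
    rcases fan_edge_classify (w.edges_subset_edgeSet he) with ⟨i, hi, rfl⟩ | rfl | ⟨i, hi, rfl⟩
    · refine Or.inl ⟨i, hi, ?_, rfl⟩
      rintro rfl
      exact claim2 he
    · exact Or.inr (Or.inl rfl)
    · rcases hSall i hi he with rfl | rfl
      · exact Or.inr (Or.inr (Or.inl rfl))
      · rw [claim3]; exact Or.inr (Or.inr (Or.inr rfl))
  · rintro (⟨i, hi, hia, rfl⟩ | rfl | rfl | rfl)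
    · exact Xall i hi hia
    · exact hwrap2.2
    · exact hSa
    · rw [← claim3]; exact hSb

lemma chain'_asc {M k : ℕ} : ∀ (n s : ℕ), s + n ≤ M + 7 →
    List.Chain' (fanGraph M k).Adj ((List.range' s n).map (fanVtx M)) := by
  intro n
  induction n with
  | zero => intro s _; exact List.isChain_nil
  | succ n ih =>
    intro s hs
    rw [List.range'_succ, List.map_cons]
    rcases Nat.eq_zero_or_pos n with rfl | hn
    · exact List.isChain_singleton _
    · obtain ⟨m, rfl⟩ : ∃ m, n = m + 1 := ⟨n - 1, by omega⟩
      simp only [List.Chain']; rw [List.range'_succ, List.map_cons, List.isChain_cons_cons]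
      constructor
      · exact fan_adj_chain (by omega)
      · rw [← List.map_cons, ← List.range'_succ]
        exact ih (s+1) (by omega)

lemma spoke_mem_fanSet {M k a i : ℕ} (ha : a + 1 ≤ M + 5) (hi : i ≤ M + 6)
    (h : spokeE M i ∈ fanSet M k a) : i = a ∨ i = a + 1 := by
  rcases h with ⟨j, hj, _, hej⟩ | he | he | he
  · exact absurd hej.symm (chainE_ne_spokeE hj hi)
  · exact absurd he.symm (wrapE_ne_spokeE hi)
  · exact Or.inl (spokeE_inj hi (by omega) he)
  · exact Or.inr (spokeE_inj hi (by omega) he)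

lemma fan_exists {M k : ℕ} (hk : 4 ≤ k) (hkM : k + 4 ≤ M + 8) {a : ℕ} (ha : a < k) :
    ∃ (u : Fin (M+8)) (w : (fanGraph M k).Walk u u), w.IsHamiltonianCycle ∧
      {e | e ∈ w.edges} = fanSet M k a := by
  have haM : a + 5 ≤ M + 8 := by omega
  -- the interior vertex list
  set L : List ℕ := List.range' (a+2) (M+5-a) ++ List.range' 0 (a+1) with hL
  set lint : List (Fin (M+8)) := L.map (fanVtx M) with hlint
  -- the full support list between the two hub occurrences
  set LL : List ℕ := List.range' (a+1) (M+6-a) ++ List.range' 0 (a+1) with hLL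
  have hLLcons : LL = (a+1) :: L := by
    rw [hLL, hL, show M+6-a = (M+5-a)+1 from by omega, List.range'_succ]
    simp
  set SL : List (Fin (M+8)) := LL.map (fanVtx M) ++ [fanVtx M (M+7)] with hSL
  -- chain condition
  have hchain : List.Chain (fanGraph M k).Adj (fanVtx M (a+1)) (lint ++ [fanVtx M (M+7)]) := by
    have hch' : List.Chain' (fanGraph M k).Adj SL := by
      rw [hSL, hLL, List.map_append, List.append_assoc]
      apply List.IsChain.append (chain'_asc _ _ (by omega))
      · apply List.IsChain.append (chain'_asc _ _ (by omega)) (List.isChain_singleton _)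
        intro x hx y hy
        rw [List.range'_concat (s := 0) (n := a)] at hx
        simp only [List.map_append, List.map_cons, List.map_nil, List.getLast?_concat,
          Option.mem_some_iff] at hx
        simp only [List.head?_cons, Option.mem_some_iff] at hy
        rw [← hx, ← hy, show 0+1*a = a from by omega]
        exact (fan_adj_spoke (by omega) hkM).symm
      · intro x hx y hy
        rw [show M+6-a = (M+5-a)+1 from by omega, List.range'_concat] at hx
        simp only [List.map_append, List.map_cons, List.map_nil, List.getLast?_concat,
          Option.mem_some_iff] at hx
        rw [List.range'_succ] at hy
        simp only [List.map_cons, List.cons_append, List.head?_cons, Option.mem_some_iff] at hy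
        rw [← hx, ← hy, show a+1+1*(M+5-a) = M+6 from by omega]
        exact fan_adj_wrap
    rw [hSL, hLLcons, List.map_cons, List.cons_append] at hch'
    exact hch'
  set p : (fanGraph M k).Walk (fanVtx M (a+1)) (fanVtx M (M+7)) :=
    walkOfList (fanVtx M (a+1)) lint (fanVtx M (M+7)) hchain with hp
  have hsupp : p.support = SL := by
    rw [hp, walkOfList_support, hSL, hLLcons, List.map_cons]
    simp [hlint]
  have hLmem : ∀ x ∈ LL, x ≤ M + 6 := by
    intro x hx
    rcases List.mem_append.1 hx with h | h <;> (rw [List.mem_range'_1] at h; omega)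
  have hLnd : LL.Nodup := by
    refine List.Nodup.append (List.nodup_range' (s := _) (n := _)) (List.nodup_range' (s := _) (n := _)) ?_
    rw [List.disjoint_left]
    intro x h1 h2
    rw [List.mem_range'_1] at h1 h2
    omega
  have hmapnd : (LL.map (fanVtx M)).Nodup :=
    List.Nodup.map_on
      (fun x hx y hy hf => fanVtx_inj (by have := hLmem x hx; omega)
        (by have := hLmem y hy; omega) hf) hLnd
  have hhub : fanVtx M (M+7) ∉ LL.map (fanVtx M) := by
    intro h
    obtain ⟨x, hx, he⟩ := List.mem_map.1 h
    have h1 := hLmem x hx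
    have := fanVtx_inj (by omega) (by omega) he
    omega
  have hSLnd : SL.Nodup := by
    rw [hSL]
    refine List.Nodup.append hmapnd (List.nodup_singleton _) ?_
    rw [List.disjoint_left]
    intro x hx hx'
    rw [List.mem_singleton] at hx'
    subst hx'
    exact hhub hx
  have hcover : ∀ v : Fin (M+8), v ∈ SL := by
    intro v
    rw [hSL]
    rcases Nat.lt_or_ge v.val (M+7) with h | h
    · refine List.mem_append_left _ (List.mem_map.2 ⟨v.val, ?_, fanVtx_eta v⟩)
      rw [hLL, List.mem_append, List.mem_range'_1, List.mem_range'_1]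
      omega
    · have hv : v.val = M + 7 := by have := v.isLt; omega
      refine List.mem_append_right _ ?_
      rw [List.mem_singleton, ← hv, fanVtx_eta]
  have hpath : p.IsPath := SimpleGraph.Walk.IsPath.mk' (by rw [hsupp]; exact hSLnd)
  have hlast : s(fanVtx M a, fanVtx M (M+7)) ∈ p.edges := by
    have hthis := walkOfList_lastEdge (fanVtx M (a+1)) lint (fanVtx M (M+7)) hchain
    have hgl : lint.getLastD (fanVtx M (a+1)) = fanVtx M a := by
      rw [hlint, hL, List.range'_concat (s := 0) (n := a), ← List.append_assoc, List.map_append,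
        List.map_cons, List.map_nil, List.getLastD_concat, show 0+1*a = a from by omega]
    rw [hgl] at hthis
    exact hthis
  have hcount1 : p.edges.countP (fun e => decide (fanVtx M (M+7) ∈ e)) = 1 := by
    have h := countP_edges_incident p (fanVtx M (M+7))
    rw [hsupp] at h
    have hc : SL.count (fanVtx M (M+7)) = 1 :=
      List.count_eq_one_of_mem hSLnd
        (by rw [hSL]; exact List.mem_append_right _ (List.mem_singleton_self _))
    rw [hc] at h
    have hne1 : fanVtx M (M+7) ≠ fanVtx M (a+1) := fanVtx_ne (by omega) (by omega) (by omega)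
    rw [if_neg hne1, if_pos rfl] at h
    omega
  have hfirstnot : s(fanVtx M (M+7), fanVtx M (a+1)) ∉ p.edges := by
    intro hmem
    have hne2 : s(fanVtx M (M+7), fanVtx M (a+1)) ≠ s(fanVtx M a, fanVtx M (M+7)) := by
      intro h
      rw [Sym2.eq_iff] at h
      rcases h with ⟨h1, h2⟩ | ⟨h1, h2⟩
      · exact absurd h1 (fanVtx_ne (by omega) (by omega) (by omega))
      · exact absurd h2 (fanVtx_ne (by omega) (by omega) (by omega))
    have := two_le_countP (p := fun e => decide (fanVtx M (M+7) ∈ e)) hmem hlast hne2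
      (show decide (fanVtx M (M+7) ∈ s(fanVtx M (M+7), fanVtx M (a+1))) = true by simp)
      (show decide (fanVtx M (M+7) ∈ s(fanVtx M a, fanVtx M (M+7))) = true by simp)
    omega
  set wcyc : (fanGraph M k).Walk (fanVtx M (M+7)) (fanVtx M (M+7)) :=
    SimpleGraph.Walk.cons (fan_adj_spoke (show a+1 ≤ k from by omega) hkM) p with hwc
  have hcyc : wcyc.IsCycle := (SimpleGraph.Walk.cons_isCycle_iff p _).2 ⟨hpath, hfirstnot⟩
  have hham : wcyc.IsHamiltonianCycle := by
    rw [SimpleGraph.Walk.isHamiltonianCycle_iff_isCycle_and_support_count_tail_eq_one]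
    refine ⟨hcyc, ?_⟩
    intro v
    rw [hwc, SimpleGraph.Walk.support_cons, List.tail_cons, hsupp]
    exact List.count_eq_one_of_mem hSLnd (hcover v)
  obtain ⟨a', ha', hset⟩ := fan_complete hk hkM hham
  have hfirstmem : spokeE M (a+1) ∈ wcyc.edges := by
    rw [hwc, SimpleGraph.Walk.edges_cons, spokeE]
    exact List.mem_cons_self
  have hlastmem : spokeE M a ∈ wcyc.edges := by
    rw [hwc, SimpleGraph.Walk.edges_cons]
    refine List.mem_cons_of_mem _ ?_
    rw [spokeE, Sym2.eq_swap]
    exact hlast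
  have hm1 : spokeE M (a+1) ∈ fanSet M k a' := by rw [← hset]; exact hfirstmem
  have hm2 : spokeE M a ∈ fanSet M k a' := by rw [← hset]; exact hlastmem
  have h1 : a + 1 = a' ∨ a + 1 = a' + 1 := spoke_mem_fanSet (by omega) (by omega) hm1
  have h2 : a = a' ∨ a = a' + 1 := spoke_mem_fanSet (by omega) (by omega) hm2
  have haa : a = a' := by omega
  exact ⟨fanVtx M (M+7), wcyc, hham, by rw [hset, haa]⟩


lemma fan_key (M k : ℕ) (hk : 4 ≤ k) (hkM : k + 4 ≤ M + 8) :
    (hamCycleSets (fanGraph M k)).ncard = k := by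
  classical
  have hmain : hamCycleSets (fanGraph M k)
      = ↑((Finset.range k).image (fun a => fanSet M k a)) := by
    ext s
    simp only [hamCycleSets, Set.mem_setOf_eq, Finset.coe_image, Set.mem_image,
      Finset.mem_coe, Finset.mem_range]
    constructor
    · rintro ⟨u, w, hw, rfl⟩
      obtain ⟨a, hak, hset⟩ := fan_complete hk hkM hw
      exact ⟨a, hak, hset.symm⟩
    · rintro ⟨a, hak, rfl⟩
      obtain ⟨u, w, hw, hset⟩ := fan_exists hk hkM hak
      exact ⟨u, w, hw, hset.symm⟩
  rw [hmain, Set.ncard_coe_finset, Finset.card_image_of_injOn, Finset.card_range]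
  intro x hx y hy hxy
  rw [Finset.mem_coe, Finset.mem_range] at hx hy
  have hx1 : spokeE M x ∈ fanSet M k x := by
    rw [fanSet]; exact Or.inr (Or.inr (Or.inl rfl))
  have hy1 : spokeE M y ∈ fanSet M k y := by
    rw [fanSet]; exact Or.inr (Or.inr (Or.inl rfl))
  have hxy' : fanSet M k x = fanSet M k y := hxy
  rw [hxy'] at hx1
  rw [← hxy'] at hy1
  have h1 := spoke_mem_fanSet (by omega) (by omega) hx1
  have h2 := spoke_mem_fanSet (by omega) (by omega) hy1
  omega

/-- For any integers `n ≥ k ≥ 4`, there exists a simple undirected graph on `15n - 27`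
vertices containing exactly `k` Hamiltonian cycles (counted as edge sets). -/
theorem exists_graph_with_k_ham_cycles (n k : ℕ) (hk : 4 ≤ k) (hkn : k ≤ n) :
    ∃ G : SimpleGraph (Fin (15*n - 27)), (hamCycleSets G).ncard = k := by
  obtain ⟨M, hM⟩ : ∃ M, 15*n - 27 = M + 8 := ⟨15*n - 35, by omega⟩
  rw [hM]
  exact ⟨fanGraph M k, fan_key M k hk (by omega)⟩
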